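/- arXiv:quant-ph/0203104 — 2 statements merged into one kernel-verified Lean document; each statement's English description precedes it below -/
import Mathlib

section
/- If iH₀' = Σ_{m=1}^{ℓ} ε_m h_m and iH₁ = Σ_{m=1}^{ℓ} δ_m y_m in the so(2ℓ+1) basis with all ε_m, δ_m real and nonzero, and if ω_m² ≠ ω₀² for all 1 ≤ m ≤ ℓ-1 (where ω₀ = ε₁, ω_m = ε_{m+1} - ε_m), then the Lie algebra generated by iH₀' and iH₁ contains the element y₁. -/
open Matrix

attribute [local instance 100] LieRing.ofAssociativeRing

/-- The `N×N` standard matrix unit `e_{a,b}` (1-based indices). -/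
noncomputable def e (N a b : ℕ) : Matrix (Fin N) (Fin N) ℂ :=
  Matrix.of fun i j => if (i : ℕ) + 1 = a ∧ (j : ℕ) + 1 = b then 1 else 0

/-- `x_{a,b} = e_{a,b} - e_{b,a}`. -/
noncomputable def X (N a b : ℕ) : Matrix (Fin N) (Fin N) ℂ := e N a b - e N b a

/-- `y_{a,b} = i (e_{a,b} + e_{b,a})`. -/
noncomputable def Y (N a b : ℕ) : Matrix (Fin N) (Fin N) ℂ :=
  Complex.I • (e N a b + e N b a)

/-- Cartan generator of `so(2ℓ+1)`: `h_m = i (e_{m+1,m+1} - e_{m+ℓ+1,m+ℓ+1})`. -/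
noncomputable def hB (l m : ℕ) : Matrix (Fin (2 * l + 1)) (Fin (2 * l + 1)) ℂ :=
  Complex.I • (e (2 * l + 1) (m + 1) (m + 1) - e (2 * l + 1) (m + l + 1) (m + l + 1))

/-- Generators `x_m` of `so(2ℓ+1)`: `x₁ = x_{ε₁}`, `x_{m+1} = x_{ε_m - ε_{m+1}}`. -/
noncomputable def xB (l m : ℕ) : Matrix (Fin (2 * l + 1)) (Fin (2 * l + 1)) ℂ :=
  if m = 1 then X (2 * l + 1) 1 2 - X (2 * l + 1) (l + 2) 1
  else X (2 * l + 1) (m + 1) m - X (2 * l + 1) (m + l) (m + l + 1)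

/-- Generators `y_m` of `so(2ℓ+1)`: `y₁ = y_{ε₁}`, `y_{m+1} = y_{ε_m - ε_{m+1}}`. -/
noncomputable def yB (l m : ℕ) : Matrix (Fin (2 * l + 1)) (Fin (2 * l + 1)) ℂ :=
  if m = 1 then Y (2 * l + 1) 1 2 - Y (2 * l + 1) (l + 2) 1
  else Y (2 * l + 1) (m + 1) m - Y (2 * l + 1) (m + l) (m + l + 1)

/-- `ω₀ = ε₁`, `ω_m = ε_{m+1} - ε_m` for `m ≥ 1`. -/
noncomputable def w (ε : ℕ → ℝ) (m : ℕ) : ℝ :=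
  if m = 0 then ε 1 else ε (m + 1) - ε m

noncomputable def nu (ε : ℕ → ℝ) (l : ℕ) (i : ℕ) : ℝ :=
  if 1 ≤ i ∧ i ≤ l then ε i else if l + 1 ≤ i ∧ i ≤ 2 * l then -ε (i - l) else 0

noncomputable def dd (ε : ℕ → ℝ) (l : ℕ) : Fin (2 * l + 1) → ℂ :=
  fun i => Complex.I * (nu ε l (i : ℕ) : ℂ)

lemma H0_diag (ε : ℕ → ℝ) (l : ℕ) :
    (∑ m ∈ Finset.Icc 1 l, ε m • hB l m) = Matrix.diagonal (dd ε l) := by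
  ext i j
  rw [Matrix.sum_apply]
  by_cases hij : i = j
  · subst hij
    rw [Matrix.diagonal_apply_eq]
    simp only [hB, Matrix.smul_apply, Matrix.sub_apply, e, Matrix.of_apply]
    by_cases h1 : 1 ≤ (i : ℕ) ∧ (i : ℕ) ≤ l
    · rw [Finset.sum_eq_single (i : ℕ)]
      · rw [if_pos ⟨rfl, rfl⟩, if_neg (by omega)]
        simp [dd, nu, if_pos h1, Complex.real_smul]
        ring
      · intro m hm hne
        simp only [Finset.mem_Icc] at hm
        rw [if_neg (by omega), if_neg (by omega)]
        simp
      · intro hni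
        exact absurd (Finset.mem_Icc.mpr ⟨h1.1, h1.2⟩) hni
    · by_cases h2 : l + 1 ≤ (i : ℕ) ∧ (i : ℕ) ≤ 2 * l
      · rw [Finset.sum_eq_single ((i : ℕ) - l)]
        · rw [if_neg (by omega), if_pos ⟨by omega, by omega⟩]
          simp only [dd, nu, if_neg h1, if_pos h2, Complex.real_smul, smul_eq_mul]
          push_cast
          ring
        · intro m hm hne
          simp only [Finset.mem_Icc] at hm
          rw [if_neg (by omega), if_neg (by omega)]
          simp
        · intro hni
          simp only [Finset.mem_Icc] at hni
          omega
      · rw [Finset.sum_eq_zero]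
        · simp [dd, nu, if_neg h1, if_neg h2]
          exact fun a b => (h2 ⟨a, b⟩).elim
        · intro m hm
          simp only [Finset.mem_Icc] at hm
          rw [if_neg (by omega), if_neg (by omega)]
          simp
  · rw [Matrix.diagonal_apply_ne _ hij]
    apply Finset.sum_eq_zero
    intro m hm
    have hij' : (i : ℕ) ≠ (j : ℕ) := fun h => hij (Fin.ext h)
    simp only [hB, Matrix.smul_apply, Matrix.sub_apply, e, Matrix.of_apply]
    rw [if_neg (by omega), if_neg (by omega)]
    simp

lemma lie_diag (N : ℕ) (d : Fin N → ℂ) (M : Matrix (Fin N) (Fin N) ℂ) :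
    ⁅(Matrix.diagonal d : Matrix (Fin N) (Fin N) ℂ), M⁆ =
      Matrix.of fun i j => (d i - d j) * M i j := by
  ext i j
  simp [Ring.lie_def, Matrix.sub_apply, Matrix.diagonal_mul, Matrix.mul_diagonal]
  ring

lemma brk2 (ε : ℕ → ℝ) (l a b : ℕ) :
    ⁅(Matrix.diagonal (dd ε l) : Matrix (Fin (2*l+1)) (Fin (2*l+1)) ℂ),
      ⁅(Matrix.diagonal (dd ε l) : Matrix (Fin (2*l+1)) (Fin (2*l+1)) ℂ), e (2*l+1) a b⁆⁆ =
      (-((nu ε l (a-1) - nu ε l (b-1))^2) : ℝ) • e (2*l+1) a b := by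
  rw [lie_diag, lie_diag]
  ext i j
  simp only [Matrix.of_apply, Matrix.smul_apply, e]
  by_cases h : (i : ℕ) + 1 = a ∧ (j : ℕ) + 1 = b
  · obtain ⟨h1, h2⟩ := h
    have ha : (i : ℕ) = a - 1 := by omega
    have hb : (j : ℕ) = b - 1 := by omega
    simp only [Matrix.of_apply, h1, h2, and_self, if_true, mul_one]
    simp only [dd, ha, hb]
    push_cast
    ring_nf
    rw [Complex.I_sq]
    rw [Complex.real_smul]
    push_cast
    ring
  · simp only [Matrix.of_apply, if_neg h, mul_zero, smul_zero]

lemma lie_sum' (N : ℕ) (A : Matrix (Fin N) (Fin N) ℂ) (s : Finset ℕ)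
    (f : ℕ → Matrix (Fin N) (Fin N) ℂ) :
    ⁅A, ∑ m ∈ s, f m⁆ = ∑ m ∈ s, ⁅A, f m⁆ := by
  simp [Ring.lie_def, Finset.mul_sum, Finset.sum_mul, ← Finset.sum_sub_distrib]

lemma rsmul (N : ℕ) (r : ℝ) (M : Matrix (Fin N) (Fin N) ℂ) :
    r • M = (r : ℂ) • M := by
  ext i j; simp [Complex.real_smul]

lemma eigen (ε : ℕ → ℝ) (l m : ℕ) (hm1 : 1 ≤ m) (hml : m ≤ l) :
    ⁅(Matrix.diagonal (dd ε l) : Matrix (Fin (2*l+1)) (Fin (2*l+1)) ℂ),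
      ⁅(Matrix.diagonal (dd ε l) : Matrix (Fin (2*l+1)) (Fin (2*l+1)) ℂ), yB l m⁆⁆ =
      (-(w ε (m-1))^2 : ℝ) • yB l m := by
  have hl : 1 ≤ l := le_trans hm1 hml
  by_cases hm : m = 1
  · subst hm
    have n0 : nu ε l 0 = 0 := by simp [nu]
    have n1 : nu ε l 1 = ε 1 := by
      rw [nu, if_pos ⟨le_refl _, hl⟩]
    have nl1 : nu ε l (l + 1) = -ε 1 := by
      have h1 : ¬(1 ≤ l + 1 ∧ l + 1 ≤ l) := by omega
      have h2 : l + 1 ≤ l + 1 ∧ l + 1 ≤ 2 * l := by omega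
      have h3 : l + 1 - l = 1 := by omega
      rw [nu, if_neg h1, if_pos h2, h3]
    have hw0 : w ε (1 - 1) = ε 1 := by simp [w]
    simp only [yB, eq_self_iff_true, if_true, Y, lie_sub, lie_add, lie_smul]
    rw [brk2, brk2, brk2, brk2]
    norm_num
    rw [n0, n1, nl1, hw0]
    rw [rsmul, rsmul, rsmul, rsmul]
    match_scalars <;> simp only [Complex.coe_algebraMap] <;> push_cast <;> ring
  · have hm2 : 2 ≤ m := by omega
    have nm : nu ε l m = ε m := by rw [nu, if_pos ⟨hm1, hml⟩]
    have nm1 : nu ε l (m - 1) = ε (m - 1) := by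
      rw [nu, if_pos ⟨by omega, by omega⟩]
    have nml1 : nu ε l (m + l - 1) = -ε (m - 1) := by
      rw [nu, if_neg (by omega), if_pos ⟨by omega, by omega⟩]
      congr 2
      omega
    have nml : nu ε l (m + l) = -ε m := by
      rw [nu, if_neg (by omega), if_pos ⟨by omega, by omega⟩]
      congr 2
      omega
    have hwm : w ε (m - 1) = ε m - ε (m - 1) := by
      rw [w, if_neg (by omega)]
      congr 2
      omega
    simp only [yB, if_neg hm, Y, lie_sub, lie_add, lie_smul, brk2, Nat.add_sub_cancel]
    rw [nm, nm1, nml1, nml, hwm]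
    rw [rsmul, rsmul, rsmul, rsmul]
    match_scalars <;> simp only [Complex.coe_algebraMap] <;> push_cast <;> ring

/-- if `iH₀' = Σ ε_m h_m`, `iH₁ = Σ δ_m y_m` in the `so(2ℓ+1)`
basis with all `ε_m, δ_m` nonzero and `ω_m² ≠ ω₀²` for `1 ≤ m ≤ ℓ-1`, then the
real Lie algebra generated by `iH₀'` and `iH₁` contains `y₁`. -/
theorem y1_mem_lieSpan_so (l : ℕ) (ε δ : ℕ → ℝ)
    (hε : ∀ m, 1 ≤ m → m ≤ l → ε m ≠ 0) (hδ : ∀ m, 1 ≤ m → m ≤ l → δ m ≠ 0)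
    (hw : ∀ m, 1 ≤ m → m ≤ l - 1 → (w ε m) ^ 2 ≠ (w ε 0) ^ 2)
    (H0 H1 : Matrix (Fin (2 * l + 1)) (Fin (2 * l + 1)) ℂ)
    (hH0 : H0 = ∑ m ∈ Finset.Icc 1 l, ε m • hB l m)
    (hH1 : H1 = ∑ m ∈ Finset.Icc 1 l, δ m • yB l m) :
    yB l 1 ∈ LieSubalgebra.lieSpan ℝ (Matrix (Fin (2 * l + 1)) (Fin (2 * l + 1)) ℂ)
      {H0, H1} := by
  set L := LieSubalgebra.lieSpan ℝ (Matrix (Fin (2 * l + 1)) (Fin (2 * l + 1)) ℂ)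
      {H0, H1} with hL
  rcases Nat.eq_zero_or_pos l with hl0 | hl
  · subst hl0
    have hz : yB 0 1 = 0 := by
      ext i j
      fin_cases i <;> fin_cases j <;> simp [yB, Y, e]
    rw [hz]
    exact L.zero_mem
  -- l ≥ 1
  have hH0d : H0 = Matrix.diagonal (dd ε l) := hH0.trans (H0_diag ε l)
  set c : ℕ → ℝ := fun m => -(w ε (m - 1)) ^ 2 with hc
  have hmemH0 : H0 ∈ L := LieSubalgebra.subset_lieSpan (by simp)
  have hmemH1 : H1 ∈ L := LieSubalgebra.subset_lieSpan (by simp)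
  have eig : ∀ m, 1 ≤ m → m ≤ l → ⁅H0, ⁅H0, yB l m⁆⁆ = c m • yB l m := by
    intro m h1 h2
    rw [hH0d]
    exact eigen ε l m h1 h2
  have key : ∀ t k, k + t = l → 1 ≤ k →
      (∑ m ∈ Finset.Icc 1 k,
        (δ m * ∏ j ∈ Finset.Icc (k + 1) l, (c m - c j)) • yB l m) ∈ L := by
    intro t
    induction t with
    | zero =>
      intro k hk _
      have hkl : k = l := by omega
      subst hkl
      have : Finset.Icc (k + 1) k = ∅ := Finset.Icc_eq_empty (by omega)
      simp only [this, Finset.prod_empty, mul_one]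
      rw [← hH1]
      exact hmemH1
    | succ t ih =>
      intro k hk hk1
      have hmem := ih (k + 1) (by omega) (by omega)
      set W := ∑ m ∈ Finset.Icc 1 (k + 1),
        (δ m * ∏ j ∈ Finset.Icc (k + 2) l, (c m - c j)) • yB l m with hW
      have prodsplit : ∀ m, (∏ j ∈ Finset.Icc (k + 1) l, (c m - c j)) =
          (c m - c (k + 1)) * ∏ j ∈ Finset.Icc (k + 2) l, (c m - c j) := by
        intro m
        rw [← Finset.Ico_add_one_right_eq_Icc, Finset.prod_eq_prod_Ico_succ_bot (by omega),
          Finset.Ico_add_one_right_eq_Icc]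
      have hbrk : ⁅H0, ⁅H0, W⁆⁆ = ∑ m ∈ Finset.Icc 1 (k + 1),
          ((δ m * ∏ j ∈ Finset.Icc (k + 2) l, (c m - c j)) * c m) • yB l m := by
        rw [hW, lie_sum', lie_sum']
        refine Finset.sum_congr rfl fun m hm => ?_
        simp only [Finset.mem_Icc] at hm
        rw [lie_smul, lie_smul, eig m hm.1 (by omega), smul_smul]
      have hsmul : c (k + 1) • W = ∑ m ∈ Finset.Icc 1 (k + 1),
          (c (k + 1) * (δ m * ∏ j ∈ Finset.Icc (k + 2) l, (c m - c j))) • yB l m := by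
        rw [hW, Finset.smul_sum]
        exact Finset.sum_congr rfl fun m _ => by rw [smul_smul]
      have hsub : ⁅H0, ⁅H0, W⁆⁆ - c (k + 1) • W =
          ∑ m ∈ Finset.Icc 1 k,
            (δ m * ∏ j ∈ Finset.Icc (k + 1) l, (c m - c j)) • yB l m := by
        rw [hbrk, hsmul, ← Finset.sum_sub_distrib]
        rw [Finset.sum_Icc_succ_top (by omega : 1 ≤ k + 1)]
        have hz : ((δ (k + 1) * ∏ j ∈ Finset.Icc (k + 2) l, (c (k + 1) - c j)) * c (k + 1)) •
              yB l (k + 1) -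
            (c (k + 1) * (δ (k + 1) * ∏ j ∈ Finset.Icc (k + 2) l, (c (k + 1) - c j))) •
              yB l (k + 1) = 0 := by
          rw [← sub_smul]
          have : (δ (k + 1) * ∏ j ∈ Finset.Icc (k + 2) l, (c (k + 1) - c j)) * c (k + 1) -
              c (k + 1) * (δ (k + 1) * ∏ j ∈ Finset.Icc (k + 2) l, (c (k + 1) - c j)) = 0 := by
            ring
          rw [this, zero_smul]
        rw [hz, add_zero]
        refine Finset.sum_congr rfl fun m _ => ?_
        rw [← sub_smul, prodsplit m]
        congr 1
        ring
      rw [← hsub]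
      exact sub_mem (L.lie_mem hmemH0 (L.lie_mem hmemH0 hmem)) (L.smul_mem _ hmem)
  have hfin := key (l - 1) 1 (by omega) le_rfl
  rw [Finset.Icc_self, Finset.sum_singleton] at hfin
  set s : ℝ := δ 1 * ∏ j ∈ Finset.Icc 2 l, (c 1 - c j) with hs
  have hsne : s ≠ 0 := by
    apply mul_ne_zero (hδ 1 le_rfl hl)
    apply Finset.prod_ne_zero_iff.mpr
    intro j hj
    simp only [Finset.mem_Icc] at hj
    have h1 : c 1 = -(w ε 0) ^ 2 := by simp [hc]
    have h2 : c j = -(w ε (j - 1)) ^ 2 := rfl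
    have h3 := hw (j - 1) (by omega) (by omega)
    rw [h1, h2]
    intro habs
    apply h3
    linarith
  have : yB l 1 = s⁻¹ • (s • yB l 1) := by
    rw [smul_smul, inv_mul_cancel₀ hsne, one_smul]
  rw [this]
  exact L.smul_mem _ hfin
end

section
/- If the Lie algebra L generated by iH₀' = Σ ε_m h_m and iH₁ = Σ δ_m y_m in the so(2ℓ+1) basis (all ε_m, δ_m nonzero) contains y₁, then L contains x_m, y_m, and h_m for all 1 ≤ m ≤ ℓ. -/
open Matrix

attribute [local instance 100] LieRing.ofAssociativeRing

set_option maxHeartbeats 1000000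

lemma e_mul_ne {N a b c d : ℕ} (h : b ≠ c) : e N a b * e N c d = 0 := by
  ext i j
  simp only [Matrix.mul_apply, e, of_apply, Matrix.zero_apply]
  rw [Finset.sum_eq_zero]
  intro k _
  split_ifs with h1 h2 <;> first | (exfalso; omega) | ring

lemma e_mul_eq {N a b c d : ℕ} (h : b = c) (h1 : 1 ≤ b) (h2 : b ≤ N) :
    e N a b * e N c d = e N a d := by
  subst h
  ext i j
  rw [Matrix.mul_apply]
  rw [Finset.sum_eq_single (⟨b - 1, by omega⟩ : Fin N)]
  · simp only [e, of_apply]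
    split_ifs <;> first | rfl | (exfalso; omega) | ring
  · intro k _ hk
    simp only [e, of_apply]
    have : (k : ℕ) ≠ b - 1 := fun hh => hk (Fin.ext hh)
    split_ifs <;> first | (exfalso; omega) | ring
  · simp

lemma xB_ne_one {l m : ℕ} (h : ¬ m = 1) :
    xB l m = X (2 * l + 1) (m + 1) m - X (2 * l + 1) (m + l) (m + l + 1) := by
  rw [xB, if_neg h]

lemma yB_ne_one {l m : ℕ} (h : ¬ m = 1) :
    yB l m = Y (2 * l + 1) (m + 1) m - Y (2 * l + 1) (m + l) (m + l + 1) := by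
  rw [yB, if_neg h]

lemma real_smul_eq (r : ℝ) {n : Type*} [Fintype n] (M : Matrix n n ℂ) :
    r • M = (r : ℂ) • M := by
  rw [← algebraMap_smul ℂ r M, Complex.coe_algebraMap]

lemma lie_h1_y1 (l : ℕ) (hl : 1 ≤ l) : ⁅hB l 1, yB l 1⁆ = xB l 1 := by
  rw [Ring.lie_def]
  simp only [hB, yB, xB, X, Y, Nat.reduceAdd, reduceIte, smul_sub, smul_add,
    sub_mul, mul_sub, add_mul, mul_add, smul_mul_assoc, mul_smul_comm, smul_smul,
    Complex.I_mul_I, neg_smul, one_smul]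
  simp (disch := omega) only [e_mul_eq, e_mul_ne]
  simp only [neg_zero, sub_zero, zero_sub, neg_neg, neg_sub, add_zero, zero_add, smul_zero]
  ring_nf
  abel

lemma lie_hk_y1 (l k : ℕ) (hk : 2 ≤ k) (hkl : k ≤ l) : ⁅hB l k, yB l 1⁆ = 0 := by
  rw [Ring.lie_def]
  simp only [hB, yB, Y, Nat.reduceAdd, reduceIte, smul_sub, smul_add,
    sub_mul, mul_sub, add_mul, mul_add, smul_mul_assoc, mul_smul_comm, smul_smul,
    Complex.I_mul_I, neg_smul, one_smul]
  simp (disch := omega) only [e_mul_ne]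
  simp only [neg_zero, sub_zero, zero_sub, neg_neg, sub_self, smul_zero]

lemma lie_x1_y1 (l : ℕ) (hl : 1 ≤ l) : ⁅xB l 1, yB l 1⁆ = (-2 : ℝ) • hB l 1 := by
  rw [Ring.lie_def, real_smul_eq]
  simp only [Complex.ofReal_neg, Complex.ofReal_ofNat]
  simp only [hB, yB, xB, X, Y, Nat.reduceAdd, reduceIte, smul_sub, smul_add,
    sub_mul, mul_sub, add_mul, mul_add, smul_mul_assoc, mul_smul_comm, smul_smul,
    Complex.I_mul_I, neg_smul, one_smul]
  simp (disch := omega) only [e_mul_eq, e_mul_ne]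
  simp only [neg_zero, sub_zero, zero_sub, neg_neg, neg_sub, add_zero, zero_add, smul_zero]
  ring_nf
  module

lemma lie_hk_y_succ (l k : ℕ) (hk : 1 ≤ k) (hkl : k + 1 ≤ l) :
    ⁅hB l k, yB l (k + 1)⁆ = xB l (k + 1) := by
  rw [Ring.lie_def]
  simp (disch := omega) only [hB, xB_ne_one, yB_ne_one, X, Y, smul_sub, smul_add,
    sub_mul, mul_sub, add_mul, mul_add, smul_mul_assoc, mul_smul_comm, smul_smul,
    Complex.I_mul_I, neg_smul, one_smul]
  simp (disch := omega) only [e_mul_eq, e_mul_ne]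
  simp only [neg_zero, sub_zero, zero_sub, neg_neg, neg_sub, add_zero, zero_add, smul_zero]
  ring_nf
  abel

lemma lie_hk_yk (l k : ℕ) (hk : 2 ≤ k) (hkl : k ≤ l) :
    ⁅hB l k, yB l k⁆ = -xB l k := by
  rw [Ring.lie_def]
  simp (disch := omega) only [hB, xB_ne_one, yB_ne_one, X, Y, smul_sub, smul_add,
    sub_mul, mul_sub, add_mul, mul_add, smul_mul_assoc, mul_smul_comm, smul_smul,
    Complex.I_mul_I, neg_smul, one_smul, neg_sub]
  simp (disch := omega) only [e_mul_eq, e_mul_ne]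
  simp only [neg_zero, sub_zero, zero_sub, neg_neg, neg_sub, add_zero, zero_add, smul_zero]
  ring_nf
  abel

lemma lie_hk_ym_zero (l k m : ℕ) (hk : 1 ≤ k) (hkl : k ≤ l) (hm : 2 ≤ m) (hml : m ≤ l)
    (h1 : m ≠ k) (h2 : m ≠ k + 1) : ⁅hB l k, yB l m⁆ = 0 := by
  rw [Ring.lie_def]
  simp (disch := omega) only [hB, yB_ne_one, Y, smul_sub, smul_add,
    sub_mul, mul_sub, add_mul, mul_add, smul_mul_assoc, mul_smul_comm, smul_smul,
    Complex.I_mul_I, neg_smul, one_smul]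
  simp (disch := omega) only [e_mul_ne]
  simp only [neg_zero, sub_zero, zero_sub, neg_neg, sub_self, smul_zero]

lemma lie_hk_x_succ (l k : ℕ) (hk : 1 ≤ k) (hkl : k + 1 ≤ l) :
    ⁅hB l k, xB l (k + 1)⁆ = -yB l (k + 1) := by
  rw [Ring.lie_def]
  simp (disch := omega) only [hB, xB_ne_one, yB_ne_one, X, Y, smul_sub, smul_add,
    sub_mul, mul_sub, add_mul, mul_add, smul_mul_assoc, mul_smul_comm, smul_smul,
    Complex.I_mul_I, neg_smul, one_smul, neg_sub, neg_add]
  simp (disch := omega) only [e_mul_eq, e_mul_ne]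
  simp only [neg_zero, sub_zero, zero_sub, neg_neg, neg_sub, add_zero, zero_add, smul_zero]
  ring_nf
  abel

lemma lie_x_y_succ (l k : ℕ) (hk : 1 ≤ k) (hkl : k + 1 ≤ l) :
    ⁅xB l (k + 1), yB l (k + 1)⁆ = (2 : ℝ) • hB l (k + 1) - (2 : ℝ) • hB l k := by
  rw [Ring.lie_def, real_smul_eq, real_smul_eq]
  simp only [Complex.ofReal_ofNat]
  simp (disch := omega) only [hB, xB_ne_one, yB_ne_one, X, Y, smul_sub, smul_add,
    sub_mul, mul_sub, add_mul, mul_add, smul_mul_assoc, mul_smul_comm, smul_smul,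
    Complex.I_mul_I, neg_smul, one_smul]
  simp (disch := omega) only [e_mul_eq, e_mul_ne]
  simp only [neg_zero, sub_zero, zero_sub, neg_neg, neg_sub, add_zero, zero_add, smul_zero]
  ring_nf
  module

lemma lie_sum'_s14 {L : Type*} [LieRing L] (x : L) (s : Finset ℕ) (f : ℕ → L) :
    ⁅x, ∑ i ∈ s, f i⁆ = ∑ i ∈ s, ⁅x, f i⁆ := by
  classical
  induction s using Finset.induction with
  | empty => simp
  | insert _ _ h ih => simp [Finset.sum_insert h, lie_add, ih]

lemma sum_lie' {L : Type*} [LieRing L] (x : L) (s : Finset ℕ) (f : ℕ → L) :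
    ⁅∑ i ∈ s, f i, x⁆ = ∑ i ∈ s, ⁅f i, x⁆ := by
  classical
  induction s using Finset.induction with
  | empty => simp
  | insert _ _ h ih => simp [Finset.sum_insert h, add_lie, ih]

/-- Lemma B: if the Lie algebra `L` generated by
`iH₀' = Σ ε_m h_m` and `iH₁ = Σ δ_m y_m` in the `so(2ℓ+1)` basis (all
`ε_m, δ_m` nonzero) contains `y₁`, then `L` contains `x_m`, `y_m` and `h_m`
for all `1 ≤ m ≤ ℓ`. -/
theorem lemma_so (l : ℕ) (ε δ : ℕ → ℝ)
    (hε : ∀ m, 1 ≤ m → m ≤ l → ε m ≠ 0) (hδ : ∀ m, 1 ≤ m → m ≤ l → δ m ≠ 0)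
    (H0 H1 : Matrix (Fin (2 * l + 1)) (Fin (2 * l + 1)) ℂ)
    (hH0 : H0 = ∑ m ∈ Finset.Icc 1 l, ε m • hB l m)
    (hH1 : H1 = ∑ m ∈ Finset.Icc 1 l, δ m • yB l m)
    (hy1 : yB l 1 ∈ LieSubalgebra.lieSpan ℝ
      (Matrix (Fin (2 * l + 1)) (Fin (2 * l + 1)) ℂ) {H0, H1}) :
    ∀ m, 1 ≤ m → m ≤ l →
      xB l m ∈ LieSubalgebra.lieSpan ℝ (Matrix (Fin (2 * l + 1)) (Fin (2 * l + 1)) ℂ)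
          {H0, H1} ∧
      yB l m ∈ LieSubalgebra.lieSpan ℝ (Matrix (Fin (2 * l + 1)) (Fin (2 * l + 1)) ℂ)
          {H0, H1} ∧
      hB l m ∈ LieSubalgebra.lieSpan ℝ (Matrix (Fin (2 * l + 1)) (Fin (2 * l + 1)) ℂ)
          {H0, H1} := by
  set L := LieSubalgebra.lieSpan ℝ (Matrix (Fin (2 * l + 1)) (Fin (2 * l + 1)) ℂ)
    {H0, H1} with hLdef
  have h0mem : H0 ∈ L := LieSubalgebra.subset_lieSpan (Set.mem_insert _ _)
  have h1mem : H1 ∈ L := LieSubalgebra.subset_lieSpan (by simp)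
  intro m hm1
  induction m, hm1 using Nat.le_induction with
  | base =>
    intro h1l
    have hx1 : xB l 1 ∈ L := by
      have hb : ⁅H0, yB l 1⁆ = ε 1 • xB l 1 := by
        rw [hH0, sum_lie']
        rw [Finset.sum_eq_single_of_mem 1 (Finset.mem_Icc.mpr ⟨le_refl 1, h1l⟩)]
        · rw [smul_lie, lie_h1_y1 l h1l]
        · intro m hm hne
          obtain ⟨hma, hmb⟩ := Finset.mem_Icc.mp hm
          rw [smul_lie, lie_hk_y1 l m (by omega) hmb, smul_zero]
      have hmem := L.lie_mem h0mem hy1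
      rw [hb] at hmem
      have hmem2 := L.smul_mem (ε 1)⁻¹ hmem
      rwa [smul_smul, inv_mul_cancel₀ (hε 1 le_rfl h1l), one_smul] at hmem2
    have hh1 : hB l 1 ∈ L := by
      have hxy := L.lie_mem hx1 hy1
      rw [lie_x1_y1 l h1l] at hxy
      have hmem2 := L.smul_mem (-2 : ℝ)⁻¹ hxy
      rwa [smul_smul, inv_mul_cancel₀ (by norm_num), one_smul] at hmem2
    exact ⟨hx1, hy1, hh1⟩
  | succ k hk ih =>
    intro hkl1
    obtain ⟨hxk, hyk, hhk⟩ := ih (by omega)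
    have hc : ⁅hB l k, yB l k⁆ ∈ L := by
      rcases eq_or_lt_of_le hk with h | h
      · subst h
        rw [lie_h1_y1 l (by omega)]
        exact hxk
      · rw [lie_hk_yk l k h (by omega)]
        exact neg_mem hxk
    have hsum : ⁅hB l k, H1⁆ = δ k • ⁅hB l k, yB l k⁆ + δ (k + 1) • xB l (k + 1) := by
      rw [hH1, lie_sum'_s14]
      simp only [lie_smul]
      rw [← Finset.sum_subset
          (show ({k, k + 1} : Finset ℕ) ⊆ Finset.Icc 1 l by
            intro x hx
            simp only [Finset.mem_insert, Finset.mem_singleton] at hx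
            rcases hx with rfl | rfl <;> (rw [Finset.mem_Icc]; omega))]
      · rw [Finset.sum_pair (by omega : k ≠ k + 1), lie_hk_y_succ l k hk hkl1]
      · intro m hm hnm
        simp only [Finset.mem_Icc] at hm
        simp only [Finset.mem_insert, Finset.mem_singleton] at hnm
        push_neg at hnm
        by_cases hm1 : m = 1
        · subst hm1
          rw [lie_hk_y1 l k (by omega) (by omega), smul_zero]
        · rw [lie_hk_ym_zero l k m (by omega) (by omega) (by omega) hm.2 hnm.1 hnm.2,
            smul_zero]
    have hδx : δ (k + 1) • xB l (k + 1) ∈ L := by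
      have heq : δ (k + 1) • xB l (k + 1) = ⁅hB l k, H1⁆ - δ k • ⁅hB l k, yB l k⁆ := by
        rw [hsum]; abel
      rw [heq]
      exact sub_mem (L.lie_mem hhk h1mem) (L.smul_mem _ hc)
    have hx : xB l (k + 1) ∈ L := by
      have hmem2 := L.smul_mem (δ (k + 1))⁻¹ hδx
      rwa [smul_smul, inv_mul_cancel₀ (hδ (k + 1) (by omega) hkl1), one_smul] at hmem2
    have hy : yB l (k + 1) ∈ L := by
      have hlie := L.lie_mem hhk hx
      rw [lie_hk_x_succ l k hk hkl1] at hlie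
      simpa using neg_mem hlie
    have hh : hB l (k + 1) ∈ L := by
      have hxy := L.lie_mem hx hy
      rw [lie_x_y_succ l k hk hkl1] at hxy
      have h2 : (2 : ℝ) • hB l (k + 1) ∈ L := by
        have hmem2 := add_mem hxy (L.smul_mem (2 : ℝ) hhk)
        rwa [sub_add_cancel] at hmem2
      have hmem3 := L.smul_mem (2 : ℝ)⁻¹ h2
      rwa [smul_smul, inv_mul_cancel₀ (by norm_num), one_smul] at hmem3
    exact ⟨hx, hy, hh⟩
end
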